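/- Let G=(V,E) be an undirected connected simple locally finite graph. Then for every function f: V → ℝ and every vertex x, the graph Laplacian satisfies Γ₂(f,f)(x) ≥ (1/2)(Δf(x))² + ((1/2)t(x) − 1)·Γ(f,f)(x), where t(x) = min_{y∼x}(4/d_y + ♯(x,y)/D(x)) and D(x) = max_{y∼x} d_y. -/

import Mathlib

open SimpleGraph Finset

variable {V : Type*}

/-- The probability measure attached to a vertex `x`: uniform on its neighbors. -/
noncomputable def nbrMeasure (G : SimpleGraph V) [G.LocallyFinite] [DecidableRel G.Adj]
    (x z : V) : ℝ :=
  if G.Adj x z then ((G.degree x : ℝ))⁻¹ else 0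

/-- A coupling (transfer plan) between the measures `m_x` and `m_y`. -/
def IsCoupling (G : SimpleGraph V) [G.LocallyFinite] [DecidableRel G.Adj]
    (x y : V) (ξ : V → V → ℝ) : Prop :=
  (∀ u v, 0 ≤ ξ u v) ∧
  (∀ u v, ξ u v ≠ 0 → G.Adj x u ∧ G.Adj y v) ∧
  (∀ u, ∑ v ∈ G.neighborFinset y, ξ u v = nbrMeasure G x u) ∧
  (∀ v, ∑ u ∈ G.neighborFinset x, ξ u v = nbrMeasure G y v)

/-- The transportation distance `W₁(m_x, m_y)`. -/
noncomputable def W1 (G : SimpleGraph V) [G.LocallyFinite] [DecidableRel G.Adj]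
    (x y : V) : ℝ :=
  sInf { c : ℝ | ∃ ξ : V → V → ℝ, IsCoupling G x y ξ ∧
    c = ∑ u ∈ G.neighborFinset x, ∑ v ∈ G.neighborFinset y, (G.dist u v : ℝ) * ξ u v }

/-- Ollivier's Ricci curvature `κ(x,y) = 1 - W₁(m_x,m_y)/d(x,y)`. -/
noncomputable def ricci (G : SimpleGraph V) [G.LocallyFinite] [DecidableRel G.Adj]
    (x y : V) : ℝ :=
  1 - W1 G x y / (G.dist x y : ℝ)

/-- Positive part of a real number: `a₊ = max a 0`. -/
noncomputable def posPart' (a : ℝ) : ℝ := max a 0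

/-- `♯(x,y)`: the number of common neighbors of `x` and `y`. -/
def triangles (G : SimpleGraph V) [G.LocallyFinite] [DecidableEq V] (x y : V) : ℕ :=
  (G.neighborFinset x ∩ G.neighborFinset y).card

/-- The graph Laplacian `Δf(x) = (1/d_x)∑_{y∼x} f(y) - f(x)`. -/
noncomputable def lap (G : SimpleGraph V) [G.LocallyFinite] (f : V → ℝ) (x : V) : ℝ :=
  (G.degree x : ℝ)⁻¹ * ∑ y ∈ G.neighborFinset x, f y - f x

/-- The Bakry–Émery operator `Γ(f,g)(x) = (1/2)(Δ(fg) - fΔg - gΔf)(x)`. -/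
noncomputable def gam (G : SimpleGraph V) [G.LocallyFinite] (f g : V → ℝ) (x : V) : ℝ :=
  (1 / 2) * (lap G (f * g) x - f x * lap G g x - g x * lap G f x)

/-- The Bakry–Émery operator `Γ₂(f,f)(x) = (1/2)(ΔΓ(f,f) - 2Γ(f,Δf))(x)`. -/
noncomputable def gam2 (G : SimpleGraph V) [G.LocallyFinite] (f : V → ℝ) (x : V) : ℝ :=
  (1 / 2) * (lap G (gam G f f) x - 2 * gam G f (lap G f) x)

/-- `D(x) = max_{y∼x} d_y`. -/
def Dmax (G : SimpleGraph V) [G.LocallyFinite] (x : V) : ℕ :=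
  (G.neighborFinset x).sup (fun z => G.degree z)

/-- `t(x) = min_{y∼x} (4/d_y + ♯(x,y)/D(x))`. -/
noncomputable def tfun (G : SimpleGraph V) [G.LocallyFinite] [DecidableEq V] (x : V) : ℝ :=
  ⨅ y : G.neighborSet x,
    (4 / (G.degree (y : V) : ℝ) + (triangles G x (y : V) : ℝ) / (Dmax G x : ℝ))

lemma lap_apply (G : SimpleGraph V) [G.LocallyFinite] (f : V → ℝ) (x : V) :
    lap G f x = (G.degree x : ℝ)⁻¹ * ∑ y ∈ G.neighborFinset x, f y - f x := rfl

lemma lap_eq (G : SimpleGraph V) [G.LocallyFinite] (f : V → ℝ) (x : V)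
    (hd : G.degree x ≠ 0) :
    lap G f x = (G.degree x : ℝ)⁻¹ * ∑ y ∈ G.neighborFinset x, (f y - f x) := by
  have hd' : (G.degree x : ℝ) ≠ 0 := Nat.cast_ne_zero.mpr hd
  rw [lap, Finset.sum_sub_distrib, Finset.sum_const, card_neighborFinset_eq_degree,
    nsmul_eq_mul, mul_sub]
  field_simp

lemma gam_eq (G : SimpleGraph V) [G.LocallyFinite] (f g : V → ℝ) (x : V)
    (hd : G.degree x ≠ 0) :
    gam G f g x = (2 * (G.degree x : ℝ))⁻¹ *
      ∑ y ∈ G.neighborFinset x, (f y - f x) * (g y - g x) := by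
  have hd' : (G.degree x : ℝ) ≠ 0 := Nat.cast_ne_zero.mpr hd
  have h1 : ∑ y ∈ G.neighborFinset x, (f y - f x) * (g y - g x)
      = (∑ y ∈ G.neighborFinset x, f y * g y) - f x * (∑ y ∈ G.neighborFinset x, g y)
        - g x * (∑ y ∈ G.neighborFinset x, f y) + (G.degree x : ℝ) * (f x * g x) := by
    rw [← card_neighborFinset_eq_degree]
    simp only [sub_mul, mul_sub, Finset.sum_sub_distrib, Finset.sum_const, nsmul_eq_mul,
      Finset.mul_sum, Finset.sum_mul, mul_comm (g x)]
    ring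
  simp only [gam, lap, Pi.mul_apply, h1]
  field_simp
  ring

lemma sym_ineq (N : Finset V) (r : V → V → Prop) [DecidableRel r]
    (hr : ∀ a b, r a b → r b a) (g : V → ℝ) :
    ∑ y ∈ N, ∑ z ∈ N.filter (r y), (g y) ^ 2 ≤
    ∑ y ∈ N, ∑ z ∈ N.filter (r y), (g z - 2 * g y) ^ 2 := by
  have swap : ∀ F : V → V → ℝ,
      ∑ y ∈ N, ∑ z ∈ N.filter (r y), F y z = ∑ y ∈ N, ∑ z ∈ N.filter (r y), F z y := by
    intro F
    simp only [Finset.sum_filter]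
    conv_rhs => rw [Finset.sum_comm]
    refine Finset.sum_congr rfl fun y _ => Finset.sum_congr rfl fun z _ => ?_
    by_cases h : r y z
    · rw [if_pos h, if_pos (hr _ _ h)]
    · rw [if_neg h, if_neg fun h' => h (hr _ _ h')]
  have h1 := swap (fun y _ => (g y) ^ 2)
  have h2 := swap (fun y z => (g z - 2 * g y) ^ 2)
  have h3 : ∑ y ∈ N, ∑ z ∈ N.filter (r y), ((g y) ^ 2 + (g z) ^ 2) ≤
      ∑ y ∈ N, ∑ z ∈ N.filter (r y), ((g z - 2 * g y) ^ 2 + (g y - 2 * g z) ^ 2) := by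
    refine Finset.sum_le_sum fun y _ => Finset.sum_le_sum fun z _ => ?_
    nlinarith [sq_nonneg (g y - g z)]
  simp only [Finset.sum_add_distrib] at h3
  linarith

lemma degree_ne_zero_of_adj (G : SimpleGraph V) [G.LocallyFinite] {x y : V}
    (h : G.Adj x y) : G.degree y ≠ 0 := by
  rw [← card_neighborFinset_eq_degree]
  exact Finset.card_ne_zero_of_mem ((SimpleGraph.mem_neighborFinset G y x).mpr h.symm)

lemma gam2_key (G : SimpleGraph V) [G.LocallyFinite] (f : V → ℝ) (x : V)
    (hd : G.degree x ≠ 0) :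
    gam2 G f x = (1 / 2) * (lap G f x) ^ 2 - gam G f f x
      + (2 * (G.degree x : ℝ))⁻¹ * ∑ y ∈ G.neighborFinset x,
          (2 * (G.degree y : ℝ))⁻¹ * ∑ z ∈ G.neighborFinset y, (f z - 2 * f y + f x) ^ 2 := by
  have hd' : (G.degree x : ℝ) ≠ 0 := Nat.cast_ne_zero.mpr hd
  have per : ∀ y ∈ G.neighborFinset x,
      (f y - f x) * (lap G f y - lap G f x)
      = gam G f f y
        - (2 * (G.degree y : ℝ))⁻¹ * ∑ z ∈ G.neighborFinset y, (f z - 2 * f y + f x) ^ 2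
        + (1 / 2) * ((f y - f x) * (f y - f x)) - (f y - f x) * lap G f x := by
    intro y hy
    have hadj : G.Adj x y := (SimpleGraph.mem_neighborFinset G x y).mp hy
    have hdy : G.degree y ≠ 0 := degree_ne_zero_of_adj G hadj
    have hdy' : (G.degree y : ℝ) ≠ 0 := Nat.cast_ne_zero.mpr hdy
    rw [gam_eq G f f y hdy, lap_eq G f y hdy]
    have expand : ∑ z ∈ G.neighborFinset y, (f z - 2 * f y + f x) ^ 2
        = ∑ z ∈ G.neighborFinset y, (f z - f y) * (f z - f y)
          - 2 * (f y - f x) * ∑ z ∈ G.neighborFinset y, (f z - f y)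
          + (G.degree y : ℝ) * ((f y - f x) * (f y - f x)) := by
      have hpt : ∀ z, (f z - 2 * f y + f x) ^ 2
          = (f z - f y) * (f z - f y) - 2 * (f y - f x) * (f z - f y)
            + (f y - f x) * (f y - f x) := fun z => by ring
      simp only [hpt]
      rw [Finset.sum_add_distrib, Finset.sum_sub_distrib, Finset.sum_const,
        card_neighborFinset_eq_degree, nsmul_eq_mul, ← Finset.mul_sum]
    rw [expand]
    field_simp
    ring
  rw [gam2, lap_apply G (gam G f f) x, gam_eq G f (lap G f) x hd,
    Finset.sum_congr rfl per]
  have hS : ∑ y ∈ G.neighborFinset x, (f y - f x) = (G.degree x : ℝ) * lap G f x := by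
    rw [lap_eq G f x hd]; field_simp
  have hG2 : ∑ y ∈ G.neighborFinset x, (f y - f x) * (f y - f x)
      = 2 * (G.degree x : ℝ) * gam G f f x := by
    rw [gam_eq G f f x hd]; field_simp
  rw [Finset.sum_sub_distrib, Finset.sum_add_distrib, Finset.sum_sub_distrib,
    ← Finset.mul_sum, ← Finset.sum_mul, hS, hG2]
  field_simp
  ring

lemma main_bound (G : SimpleGraph V) [G.LocallyFinite] [DecidableRel G.Adj] [DecidableEq V]
    (f : V → ℝ) (x : V) (hd : G.degree x ≠ 0) :
    tfun G x * ∑ y ∈ G.neighborFinset x, (f y - f x) ^ 2 ≤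
      2 * ∑ y ∈ G.neighborFinset x,
        (2 * (G.degree y : ℝ))⁻¹ * ∑ z ∈ G.neighborFinset y, (f z - 2 * f y + f x) ^ 2 := by
  obtain ⟨y₀, hy₀⟩ : (G.neighborFinset x).Nonempty := by
    rw [← Finset.card_pos, card_neighborFinset_eq_degree]
    exact Nat.pos_of_ne_zero hd
  have hadj0 : G.Adj x y₀ := (SimpleGraph.mem_neighborFinset G x y₀).mp hy₀
  have hDpos : 0 < Dmax G x :=
    lt_of_lt_of_le (Nat.pos_of_ne_zero (degree_ne_zero_of_adj G hadj0))
      (Finset.le_sup (f := fun z => G.degree z) hy₀)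
  have hD' : (0 : ℝ) < (Dmax G x : ℝ) := Nat.cast_pos.mpr hDpos
  have hdy : ∀ y ∈ G.neighborFinset x, (0 : ℝ) < (G.degree y : ℝ) := fun y hy =>
    Nat.cast_pos.mpr (Nat.pos_of_ne_zero
      (degree_ne_zero_of_adj G ((SimpleGraph.mem_neighborFinset G x y).mp hy)))
  have htle : ∀ y ∈ G.neighborFinset x,
      tfun G x ≤ 4 / (G.degree y : ℝ) + (triangles G x y : ℝ) / (Dmax G x : ℝ) := by
    intro y hy
    exact ciInf_le (Finite.bddBelow_range _)
      (⟨y, (SimpleGraph.mem_neighborSet G x y).mpr ((SimpleGraph.mem_neighborFinset G x y).mp hy)⟩ :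
        G.neighborSet x)
  have hfilter : ∀ y : V, (G.neighborFinset x).filter (G.Adj y)
      = G.neighborFinset x ∩ G.neighborFinset y := by
    intro y
    ext z
    simp [SimpleGraph.mem_neighborFinset]
  -- symmetric double-sum inequality
  have hsym : ∑ y ∈ G.neighborFinset x, ∑ z ∈ (G.neighborFinset x).filter (G.Adj y),
        (f y - f x) ^ 2
      ≤ ∑ y ∈ G.neighborFinset x, ∑ z ∈ (G.neighborFinset x).filter (G.Adj y),
        (f z - 2 * f y + f x) ^ 2 := by
    have h := sym_ineq (G.neighborFinset x) G.Adj (fun a b hab => hab.symm)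
      (fun v => f v - f x)
    calc ∑ y ∈ G.neighborFinset x, ∑ z ∈ (G.neighborFinset x).filter (G.Adj y), (f y - f x) ^ 2
        ≤ ∑ y ∈ G.neighborFinset x, ∑ z ∈ (G.neighborFinset x).filter (G.Adj y),
            (f z - f x - 2 * (f y - f x)) ^ 2 := h
      _ = _ := by
          refine Finset.sum_congr rfl fun y _ => Finset.sum_congr rfl fun z _ => ?_
          ring
  calc tfun G x * ∑ y ∈ G.neighborFinset x, (f y - f x) ^ 2
      = ∑ y ∈ G.neighborFinset x, tfun G x * (f y - f x) ^ 2 := Finset.mul_sum _ _ _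
    _ ≤ ∑ y ∈ G.neighborFinset x,
          (4 / (G.degree y : ℝ) + (triangles G x y : ℝ) / (Dmax G x : ℝ)) * (f y - f x) ^ 2 :=
        Finset.sum_le_sum fun y hy =>
          mul_le_mul_of_nonneg_right (htle y hy) (sq_nonneg _)
    _ = (∑ y ∈ G.neighborFinset x, 4 / (G.degree y : ℝ) * (f y - f x) ^ 2)
        + (Dmax G x : ℝ)⁻¹ * ∑ y ∈ G.neighborFinset x,
            ∑ z ∈ (G.neighborFinset x).filter (G.Adj y), (f y - f x) ^ 2 := by
        rw [Finset.mul_sum, ← Finset.sum_add_distrib]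
        refine Finset.sum_congr rfl fun y hy => ?_
        rw [hfilter y, Finset.sum_const, nsmul_eq_mul]
        rw [show ((G.neighborFinset x ∩ G.neighborFinset y).card : ℝ)
            = (triangles G x y : ℝ) from rfl]
        ring
    _ ≤ (∑ y ∈ G.neighborFinset x, 4 / (G.degree y : ℝ) * (f y - f x) ^ 2)
        + (Dmax G x : ℝ)⁻¹ * ∑ y ∈ G.neighborFinset x,
            ∑ z ∈ (G.neighborFinset x).filter (G.Adj y), (f z - 2 * f y + f x) ^ 2 := by
        exact add_le_add_right (mul_le_mul_of_nonneg_left hsym (inv_nonneg.mpr hD'.le)) _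
    _ = ∑ y ∈ G.neighborFinset x, (4 / (G.degree y : ℝ) * (f y - f x) ^ 2
          + (Dmax G x : ℝ)⁻¹ * ∑ z ∈ (G.neighborFinset x).filter (G.Adj y),
              (f z - 2 * f y + f x) ^ 2) := by
        rw [Finset.mul_sum, ← Finset.sum_add_distrib]
    _ ≤ ∑ y ∈ G.neighborFinset x, (4 / (G.degree y : ℝ) * (f y - f x) ^ 2
          + (G.degree y : ℝ)⁻¹ * ∑ z ∈ (G.neighborFinset x).filter (G.Adj y),
              (f z - 2 * f y + f x) ^ 2) := by
        refine Finset.sum_le_sum fun y hy => add_le_add_right ?_ _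
        refine mul_le_mul_of_nonneg_right ?_ (Finset.sum_nonneg fun z _ => sq_nonneg _)
        refine inv_anti₀ (hdy y hy) ?_
        exact_mod_cast Finset.le_sup (f := fun z => G.degree z) hy
    _ ≤ ∑ y ∈ G.neighborFinset x,
          (G.degree y : ℝ)⁻¹ * ∑ z ∈ G.neighborFinset y, (f z - 2 * f y + f x) ^ 2 := by
        refine Finset.sum_le_sum fun y hy => ?_
        have hadj : G.Adj x y := (SimpleGraph.mem_neighborFinset G x y).mp hy
        have hxni : x ∉ (G.neighborFinset x).filter (G.Adj y) := fun hc =>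
          (G.irrefl (Finset.mem_filter.mp hc |>.1 |> (SimpleGraph.mem_neighborFinset G x x).mp))
        have hsub : insert x ((G.neighborFinset x).filter (G.Adj y)) ⊆ G.neighborFinset y := by
          intro z hz
          rcases Finset.mem_insert.mp hz with h | h
          · subst h; exact (SimpleGraph.mem_neighborFinset G y z).mpr hadj.symm
          · exact (SimpleGraph.mem_neighborFinset G y z).mpr (Finset.mem_filter.mp h).2
        have hle : ∑ z ∈ insert x ((G.neighborFinset x).filter (G.Adj y)),
              (f z - 2 * f y + f x) ^ 2
            ≤ ∑ z ∈ G.neighborFinset y, (f z - 2 * f y + f x) ^ 2 :=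
          Finset.sum_le_sum_of_subset_of_nonneg hsub (fun i _ _ => sq_nonneg _)
        rw [Finset.sum_insert hxni] at hle
        calc 4 / (G.degree y : ℝ) * (f y - f x) ^ 2
              + (G.degree y : ℝ)⁻¹ * ∑ z ∈ (G.neighborFinset x).filter (G.Adj y),
                  (f z - 2 * f y + f x) ^ 2
            = (G.degree y : ℝ)⁻¹ * ((f x - 2 * f y + f x) ^ 2
                + ∑ z ∈ (G.neighborFinset x).filter (G.Adj y), (f z - 2 * f y + f x) ^ 2) := by
              ring
          _ ≤ (G.degree y : ℝ)⁻¹ * ∑ z ∈ G.neighborFinset y, (f z - 2 * f y + f x) ^ 2 :=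
              mul_le_mul_of_nonneg_left hle (inv_nonneg.mpr (hdy y hy).le)
    _ = 2 * ∑ y ∈ G.neighborFinset x,
          (2 * (G.degree y : ℝ))⁻¹ * ∑ z ∈ G.neighborFinset y, (f z - 2 * f y + f x) ^ 2 := by
        rw [Finset.mul_sum]
        refine Finset.sum_congr rfl fun y hy => ?_
        have h := (hdy y hy).ne'
        field_simp

/-- On a connected locally finite graph, the Laplacian satisfies
`Γ₂(f,f)(x) ≥ (1/2)(Δf(x))² + ((1/2)t(x) - 1)·Γ(f,f)(x)`. -/
theorem CD_inequality_triangles (G : SimpleGraph V) [G.LocallyFinite]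
    [DecidableRel G.Adj] [DecidableEq V]
    (hG : G.Connected) (f : V → ℝ) (x : V) :
    gam2 G f x ≥
      (1 / 2) * (lap G f x) ^ 2 + ((1 / 2) * tfun G x - 1) * gam G f f x := by
  by_cases hd : G.degree x = 0
  · have hN : G.neighborFinset x = ∅ := by
      rw [← Finset.card_eq_zero, card_neighborFinset_eq_degree]; exact hd
    haveI hE : IsEmpty (G.neighborSet x) := by
      constructor
      rintro ⟨y, hy⟩
      have h1 : y ∈ G.neighborFinset x := by simpa using hy
      rw [hN] at h1
      exact absurd h1 (Finset.notMem_empty y)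
    have ht : tfun G x = 0 := Real.iInf_of_isEmpty _
    simp only [gam2, gam, lap, hN, Finset.sum_empty, mul_zero, Pi.mul_apply, ht, hd,
      Nat.cast_zero, inv_zero, zero_mul, zero_sub]
    nlinarith [sq_nonneg (f x)]
  · have hd' : (G.degree x : ℝ) ≠ 0 := Nat.cast_ne_zero.mpr hd
    have h2d : (0 : ℝ) < (2 * (G.degree x : ℝ))⁻¹ := by
      have : (0 : ℝ) < (G.degree x : ℝ) := Nat.cast_pos.mpr (Nat.pos_of_ne_zero hd)
      positivity
    rw [ge_iff_le, gam2_key G f x hd]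
    have hΓ : gam G f f x = (2 * (G.degree x : ℝ))⁻¹ *
        ∑ y ∈ G.neighborFinset x, (f y - f x) ^ 2 := by
      rw [gam_eq G f f x hd]
      congr 1
      exact Finset.sum_congr rfl fun y _ => (pow_two _).symm
    rw [hΓ]
    have main := main_bound G f x hd
    nlinarith [mul_le_mul_of_nonneg_left main h2d.le]
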